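/- Simplification of the operator coefficients of the homogeneous Yang–Baxter deformed coupled action (Appendix D). Let A be a unital associative algebra over ℂ, let R ∈ A, let N ≥ 2, let ℓ ∈ ℂ be nonzero, and let ρ_rs ∈ ℂ for r, s ∈ {1, …, N}. Set ϑ = 2ρ_{NN}/ℓ and Õ_rs = ρ_rs·1 − (2ρ_{rN}ρ_{Ns}/ℓ) R, and assume 1 − ϑR is invertible in A. Then for all r, s ∈ {1, …, N}: Õ_rs + (2ρ_{rN} Õ_{Ns} + 2ρ_{Ns} Õ_{rN}) ℓ^{−1} R (1−ϑR)^{−1} + 4ρ_{rN}ρ_{Ns} ℓ^{−2} Õ_{NN} R² (1−ϑR)^{−2} = ρ_rs·1 + (2ρ_{rN}ρ_{Ns}/ℓ) R (1−ϑR)^{−1}. In particular, when s = N this expression equals ρ_{rN} (1−ϑR)^{−1}, and when r = N it equals ρ_{Nr} (1−ϑR)^{−1}. -/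
import Mathlib


/-- The operator `Õ_{rs} = ρ_{rs}·1 - (2 b c/ℓ) R` appearing in the homogeneous Yang–Baxter
deformed coupled action, with `a = ρ_{rs}`, `b = ρ_{rN}`, `c = ρ_{Ns}`. -/
noncomputable def Otil {A : Type*} [Ring A] [Algebra ℂ A]
    (ℓ : ℂ) (R : A) (a b c : ℂ) : A :=
  a • (1 : A) - (2 * b * c / ℓ) • R

/-- **Simplification of the operator coefficients of the homogeneous Yang–Baxter deformed
coupled action** (Appendix D).  With `ϑ = 2ρ_{NN}/ℓ` and `Õ_{rs} = ρ_{rs}·1 - (2ρ_{rN}ρ_{Ns}/ℓ)R`,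
assuming `1 - ϑR` invertible,
`Õ_{rs} + (2ρ_{rN} Õ_{Ns} + 2ρ_{Ns} Õ_{rN}) ℓ⁻¹ R (1-ϑR)⁻¹ + 4ρ_{rN}ρ_{Ns} ℓ⁻² Õ_{NN} R² (1-ϑR)⁻²
  = ρ_{rs}·1 + (2ρ_{rN}ρ_{Ns}/ℓ) R (1-ϑR)⁻¹`;
in particular for `s = N` this equals `ρ_{rN}(1-ϑR)⁻¹`, and for `r = N` it equals
`ρ_{Nr}(1-ϑR)⁻¹`. -/
theorem hYB_operator_coefficient_identity
    {A : Type*} [Ring A] [Algebra ℂ A]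
    (R : A) (N : ℕ) (hN : 2 ≤ N) (ℓ : ℂ) (hℓ : ℓ ≠ 0)
    (ρ : Fin N → Fin N → ℂ)
    (lN : Fin N) (hlN : (lN : ℕ) = N - 1)
    (hinv : IsUnit (1 - (2 * ρ lN lN / ℓ) • R)) :
    (∀ r s : Fin N,
      Otil ℓ R (ρ r s) (ρ r lN) (ρ lN s)
        + ℓ⁻¹ • (((2 * ρ r lN) • Otil ℓ R (ρ lN s) (ρ lN lN) (ρ lN s)
            + (2 * ρ lN s) • Otil ℓ R (ρ r lN) (ρ r lN) (ρ lN lN))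
          * (R * Ring.inverse (1 - (2 * ρ lN lN / ℓ) • R)))
        + (4 * ρ r lN * ρ lN s / ℓ ^ 2) •
            (Otil ℓ R (ρ lN lN) (ρ lN lN) (ρ lN lN)
              * (R ^ 2 * (Ring.inverse (1 - (2 * ρ lN lN / ℓ) • R)) ^ 2))
      = ρ r s • (1 : A)
        + (2 * ρ r lN * ρ lN s / ℓ) • (R * Ring.inverse (1 - (2 * ρ lN lN / ℓ) • R))) ∧
    (∀ r : Fin N,
      ρ r lN • (1 : A)
          + (2 * ρ r lN * ρ lN lN / ℓ) • (R * Ring.inverse (1 - (2 * ρ lN lN / ℓ) • R))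
        = ρ r lN • Ring.inverse (1 - (2 * ρ lN lN / ℓ) • R)) ∧
    (∀ s : Fin N,
      ρ lN s • (1 : A)
          + (2 * ρ lN lN * ρ lN s / ℓ) • (R * Ring.inverse (1 - (2 * ρ lN lN / ℓ) • R))
        = ρ lN s • Ring.inverse (1 - (2 * ρ lN lN / ℓ) • R)) := by
  set d : ℂ := ρ lN lN with hd
  set ϑ : ℂ := 2 * d / ℓ with hϑ
  set x : A := 1 - ϑ • R with hx
  set u : A := Ring.inverse x with hu
  have hxu : x * u = 1 := Ring.mul_inverse_cancel x hinv
  have hux : u * x = 1 := Ring.inverse_mul_cancel x hinv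
  have hRx : R * x = x * R := by
    simp only [hx, mul_sub, sub_mul, mul_one, one_mul, mul_smul_comm, smul_mul_assoc]
  have hRu : R * u = u * R := by
    calc R * u = u * x * (R * u) := by rw [hux, one_mul]
    _ = u * (R * x) * u := by rw [hRx]; noncomm_ring
    _ = u * R * (x * u) := by noncomm_ring
    _ = u * R := by rw [hxu, mul_one]
  have hu1 : u = 1 + ϑ • (R * u) := by
    have h : u - ϑ • (R * u) = 1 := by
      have := hxu
      rw [hx, sub_mul, one_mul, smul_mul_assoc] at this
      exact this
    exact sub_eq_iff_eq_add.mp h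
  have hxRu : x * (R * u) = R := by
    rw [hRu, ← mul_assoc, hxu, one_mul]
  have hR2u : R ^ 2 * u = u * R ^ 2 := by
    rw [sq, mul_assoc, hRu, ← mul_assoc, hRu, mul_assoc]
  have hxR2u2 : x * (R ^ 2 * u ^ 2) = R ^ 2 * u := by
    have h5 : R ^ 2 * u ^ 2 = u * (R ^ 2 * u) := by
      calc R ^ 2 * u ^ 2 = R ^ 2 * u * u := by noncomm_ring
      _ = u * R ^ 2 * u := by rw [hR2u]
      _ = u * (R ^ 2 * u) := by noncomm_ring
    rw [h5, ← mul_assoc, hxu, one_mul]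
  have hRu2 : R * u = R + ϑ • (R ^ 2 * u) := by
    conv_lhs => rw [hu1]
    rw [mul_add, mul_one, mul_smul_comm, ← mul_assoc, ← sq]
  have hOc : ∀ c : ℂ, Otil ℓ R c d c = c • x := by
    intro c
    rw [Otil, hx, smul_sub, smul_smul]
    congr 2
    rw [hϑ]; ring
  have hOb : ∀ b : ℂ, Otil ℓ R b b d = b • x := by
    intro b
    rw [Otil, hx, smul_sub, smul_smul]
    congr 2
    rw [hϑ]; ring
  refine ⟨?_, ?_, ?_⟩
  · intro r s
    set a := ρ r s
    set b := ρ r lN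
    set c := ρ lN s
    rw [hOc c, hOb b, hOc d, Otil, smul_smul, smul_smul, ← add_smul,
      smul_mul_assoc, smul_mul_assoc, hxRu, hxR2u2, hRu2, smul_smul, smul_smul, smul_add,
      smul_smul]
    have h1 : ℓ⁻¹ * (2 * b * c + 2 * c * b) = 2 * b * c / ℓ + 2 * b * c / ℓ := by ring
    have h2 : 4 * b * c / ℓ ^ 2 * d = 2 * b * c / ℓ * ϑ := by
      rw [hϑ]; field_simp; ring
    rw [h1, h2, add_smul]
    abel
  · intro r
    conv_rhs => rw [hu1]
    rw [smul_add, smul_smul]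
    congr 2
    rw [hϑ]; ring
  · intro s
    conv_rhs => rw [hu1]
    rw [smul_add, smul_smul]
    congr 2
    rw [hϑ]; ring
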